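/- Let f : Z → X be a finite locally free morphism of schemes, and let A = f_*(O_Z), a finite locally free O_X-algebra. Let Id(Z) → X be the scheme over X whose T-points (for an X-scheme T) are the idempotent elements of A ⊗_{O_X} O_T. Then Id(Z) → X is étale. -/

import Mathlib

universe u

open TensorProduct

namespace IdemModelAux

variable {R A : Type u} [CommRing R] [CommRing A] [Algebra R A]
variable {n : ℕ} (a : Fin n → A) (φ : Fin n → (A →ₗ[R] R))

/-- Coordinate functional on `A ⊗[R] T` induced by the dual-basis functional `φ i`. -/
noncomputable def coord (T : Type u) [CommRing T] [Algebra R T] (i : Fin n) :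
    A ⊗[R] T →ₗ[R] T :=
  (TensorProduct.lid R T).toLinearMap ∘ₗ LinearMap.rTensor T (φ i)

variable {T : Type u} [CommRing T] [Algebra R T]

@[simp] lemma coord_tmul (i : Fin n) (x : A) (t : T) :
    coord φ T i (x ⊗ₜ[R] t) = φ i x • t := by
  simp [coord]

variable (hφ : ∀ x : A, ∑ i, φ i x • a i = x)

include hφ in
lemma key (z : A ⊗[R] T) : ∑ i, a i ⊗ₜ[R] coord φ T i z = z := by
  induction z using TensorProduct.induction_on with
  | zero => simp
  | tmul x t =>
      simp only [coord_tmul]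
      calc ∑ i, a i ⊗ₜ[R] (φ i x • t) = ∑ i, (φ i x • a i) ⊗ₜ[R] t := by
            simp [TensorProduct.smul_tmul]
        _ = (∑ i, φ i x • a i) ⊗ₜ[R] t := by rw [TensorProduct.sum_tmul]
        _ = x ⊗ₜ[R] t := by rw [hφ]
  | add x y hx hy =>
      simp only [map_add, TensorProduct.tmul_add, Finset.sum_add_distrib, hx, hy]

/-- The equations cutting out idempotent elements in coordinates. -/
def Sat (t : Fin n → T) : Prop :=
  (∀ i, t i = ∑ j, φ i (a j) • t j) ∧
  (∀ i, (∑ j, ∑ k, φ i (a j * a k) • (t j * t k)) = t i)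

lemma mul_sum_tmul (t t' : Fin n → T) :
    (∑ j, a j ⊗ₜ[R] t j) * (∑ k, a k ⊗ₜ[R] t' k)
      = ∑ j, ∑ k, (a j * a k) ⊗ₜ[R] (t j * t' k) := by
  rw [Finset.sum_mul_sum]
  simp [Algebra.TensorProduct.tmul_mul_tmul]

lemma coord_sum_tmul (t : Fin n → T) (i : Fin n) :
    coord φ T i (∑ j, a j ⊗ₜ[R] t j) = ∑ j, φ i (a j) • t j := by
  simp

include hφ in
lemma idem_of_sat {t : Fin n → T} (ht : Sat a φ t) :
    (∑ j, a j ⊗ₜ[R] t j) * (∑ j, a j ⊗ₜ[R] t j) = ∑ j, a j ⊗ₜ[R] t j := by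
  have h1 : ∀ i, coord φ T i ((∑ j, a j ⊗ₜ[R] t j) * (∑ j, a j ⊗ₜ[R] t j)) = t i := by
    intro i
    rw [mul_sum_tmul]
    rw [map_sum]
    simp only [map_sum, coord_tmul]
    exact ht.2 i
  conv_lhs => rw [← key a φ hφ ((∑ j, a j ⊗ₜ[R] t j) * (∑ j, a j ⊗ₜ[R] t j))]
  simp only [h1]

include hφ in
lemma sat_coord {e : A ⊗[R] T} (he : e * e = e) :
    Sat a φ (fun i => coord φ T i e) := by
  constructor
  · intro i
    conv_lhs => rw [← key a φ hφ e]
    simp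
  · intro i
    have h2 : (∑ j, a j ⊗ₜ[R] coord φ T j e) * (∑ j, a j ⊗ₜ[R] coord φ T j e) = e := by
      rw [key a φ hφ e, he]
    calc (∑ j, ∑ k, φ i (a j * a k) • (coord φ T j e * coord φ T k e))
        = coord φ T i ((∑ j, a j ⊗ₜ[R] coord φ T j e) * (∑ j, a j ⊗ₜ[R] coord φ T j e)) := by
          rw [mul_sum_tmul]
          simp
      _ = coord φ T i e := by rw [h2]

/-- The equivalence between tuples satisfying the equations and idempotents. -/
noncomputable def satEquivIdem : {t : Fin n → T // Sat a φ t} ≃ {e : A ⊗[R] T // e * e = e} where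
  toFun th := ⟨∑ j, a j ⊗ₜ[R] th.1 j, idem_of_sat a φ hφ th.2⟩
  invFun eh := ⟨fun i => coord φ T i eh.1, sat_coord a φ hφ eh.2⟩
  left_inv th := by
    ext i
    simpa using (th.2.1 i).symm
  right_inv eh := by
    ext
    exact key a φ hφ eh.1

open MvPolynomial in
/-- Generators of the ideal of relations. -/
noncomputable def gens : (Fin n) ⊕ (Fin n) → MvPolynomial (Fin n) R
  | .inl i => X i - ∑ j, C (φ i (a j)) * X j
  | .inr i => (∑ j, ∑ k, C (φ i (a j * a k)) * (X j * X k)) - X i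

/-- The ideal of relations. -/
noncomputable def Jdl : Ideal (MvPolynomial (Fin n) R) := Ideal.span (Set.range (gens a φ))

/-- The model algebra: the coordinate ring of the scheme of idempotents. -/
abbrev Model : Type u := MvPolynomial (Fin n) R ⧸ Jdl a φ

lemma aeval_gens_inl (t : Fin n → T) (i : Fin n) :
    MvPolynomial.aeval t (gens a φ (.inl i)) = t i - ∑ j, φ i (a j) • t j := by
  simp [gens, Algebra.smul_def]

lemma aeval_gens_inr (t : Fin n → T) (i : Fin n) :
    MvPolynomial.aeval t (gens a φ (.inr i))
      = (∑ j, ∑ k, φ i (a j * a k) • (t j * t k)) - t i := by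
  simp [gens, Algebra.smul_def, mul_assoc]

lemma aeval_gens_iff (t : Fin n → T) :
    (∀ ι, MvPolynomial.aeval t (gens a φ ι) = 0) ↔ Sat a φ t := by
  constructor
  · intro h
    constructor
    · intro i
      have := h (.inl i)
      rw [aeval_gens_inl, sub_eq_zero] at this
      exact this
    · intro i
      have := h (.inr i)
      rw [aeval_gens_inr, sub_eq_zero] at this
      exact this
  · rintro ⟨h1, h2⟩ (i | i)
    · rw [aeval_gens_inl, sub_eq_zero]; exact h1 i
    · rw [aeval_gens_inr, sub_eq_zero]; exact h2 i

lemma algHom_mk_eq_aeval (f : Model a φ →ₐ[R] T) (p : MvPolynomial (Fin n) R) :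
    f (Ideal.Quotient.mk (Jdl a φ) p)
      = MvPolynomial.aeval (fun i => f (Ideal.Quotient.mk (Jdl a φ) (MvPolynomial.X i))) p := by
  have h := MvPolynomial.aeval_unique (f.comp (Ideal.Quotient.mkₐ R (Jdl a φ)))
  have h2 := DFunLike.congr_fun h p
  simpa [Function.comp_def] using h2

lemma sat_of_algHom (f : Model a φ →ₐ[R] T) :
    Sat a φ (fun i => f (Ideal.Quotient.mk (Jdl a φ) (MvPolynomial.X i))) := by
  rw [← aeval_gens_iff]
  intro ι
  rw [← algHom_mk_eq_aeval]
  have hmem : gens a φ ι ∈ Jdl a φ := Ideal.subset_span ⟨ι, rfl⟩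
  rw [Ideal.Quotient.eq_zero_iff_mem.mpr hmem, map_zero]

lemma algHom_ext_model {f g : Model a φ →ₐ[R] T}
    (h : ∀ i, f (Ideal.Quotient.mk (Jdl a φ) (MvPolynomial.X i))
      = g (Ideal.Quotient.mk (Jdl a φ) (MvPolynomial.X i))) : f = g := by
  apply Ideal.Quotient.algHom_ext
  apply MvPolynomial.algHom_ext
  intro i
  simpa using h i

lemma aeval_mem_Jdl {t : Fin n → T} (ht : Sat a φ t) :
    ∀ p ∈ Jdl a φ, MvPolynomial.aeval t p = 0 := by
  intro p hp
  have hle : Jdl a φ ≤ RingHom.ker (MvPolynomial.aeval t : MvPolynomial (Fin n) R →ₐ[R] T) := by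
    rw [Jdl, Ideal.span_le]
    rintro _ ⟨ι, rfl⟩
    exact (aeval_gens_iff a φ t).mpr ht ι
  exact hle hp

/-- The model algebra's `T`-points biject with tuples satisfying the equations. -/
noncomputable def tupleEquiv : (Model a φ →ₐ[R] T) ≃ {t : Fin n → T // Sat a φ t} where
  toFun f := ⟨fun i => f (Ideal.Quotient.mk (Jdl a φ) (MvPolynomial.X i)), sat_of_algHom a φ f⟩
  invFun th := Ideal.Quotient.liftₐ (Jdl a φ) (MvPolynomial.aeval th.1) (aeval_mem_Jdl a φ th.2)
  left_inv f := by
    apply algHom_ext_model a φ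
    intro i
    erw [Ideal.Quotient.lift_mk]
    simp
  right_inv th := by
    ext i
    simp
    erw [Ideal.Quotient.lift_mk]
    simp

section Etale

variable {B : Type u} [CommRing B] [Algebra R B] (I : Ideal B)

lemma map_eq_lTensor (z : A ⊗[R] B) :
    Algebra.TensorProduct.map (AlgHom.id R A) (Ideal.Quotient.mkₐ R I) z
      = LinearMap.lTensor A (Ideal.Quotient.mkₐ R I).toLinearMap z := by
  induction z using TensorProduct.induction_on with
  | zero => simp
  | tmul x b => simp
  | add x y hx hy => simp [hx, hy]

lemma exact_sub_mk : Function.Exact ((I.restrictScalars R).subtype)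
    (Ideal.Quotient.mkₐ R I).toLinearMap := by
  intro y
  constructor
  · intro hy
    have : y ∈ I := Ideal.Quotient.eq_zero_iff_mem.mp hy
    exact ⟨⟨y, this⟩, rfl⟩
  · rintro ⟨⟨x, hx⟩, rfl⟩
    exact Ideal.Quotient.eq_zero_iff_mem.mpr hx

lemma range_mul_range (hI : I ^ 2 = ⊥)
    (u' v' : A ⊗[R] ↥(I.restrictScalars R)) :
    (LinearMap.lTensor A (I.restrictScalars R).subtype u')
      * (LinearMap.lTensor A (I.restrictScalars R).subtype v') = 0 := by
  have hzero : ∀ (i j : I.restrictScalars R), (i : B) * (j : B) = 0 := by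
    intro i j
    have h2 : (i : B) * (j : B) ∈ I ^ 2 := by
      rw [pow_two]; exact Ideal.mul_mem_mul i.2 j.2
    rw [hI] at h2
    simpa using h2
  induction u' using TensorProduct.induction_on with
  | zero => simp
  | tmul x i =>
      induction v' using TensorProduct.induction_on with
      | zero => simp
      | tmul y j =>
          simp only [LinearMap.lTensor_tmul, Submodule.coe_subtype,
            Algebra.TensorProduct.tmul_mul_tmul, hzero i j, TensorProduct.tmul_zero]
      | add v₁ v₂ h1 h2 => simp only [map_add, mul_add, h1, h2, add_zero]
  | add u₁ u₂ h1 h2 => simp only [map_add, add_mul, h1, h2, add_zero]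

lemma mul_eq_zero_of_ker (hI : I ^ 2 = ⊥) (u v : A ⊗[R] B)
    (hu : LinearMap.lTensor A (Ideal.Quotient.mkₐ R I).toLinearMap u = 0)
    (hv : LinearMap.lTensor A (Ideal.Quotient.mkₐ R I).toLinearMap v = 0) :
    u * v = 0 := by
  have hex := lTensor_exact A (exact_sub_mk (R := R) I) Ideal.Quotient.mk_surjective
  obtain ⟨u', rfl⟩ := (hex u).mp hu
  obtain ⟨v', rfl⟩ := (hex v).mp hv
  exact range_mul_range I hI u' v'

variable (hI : I ^ 2 = ⊥)

include hI in
lemma idem_injective {e f : A ⊗[R] B} (he : e * e = e) (hf : f * f = f)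
    (h : Algebra.TensorProduct.map (AlgHom.id R A) (Ideal.Quotient.mkₐ R I) e
       = Algebra.TensorProduct.map (AlgHom.id R A) (Ideal.Quotient.mkₐ R I) f) : e = f := by
  have hd : (e - f) * (e - f) = 0 := by
    apply mul_eq_zero_of_ker I hI <;>
      rw [map_sub, ← map_eq_lTensor, ← map_eq_lTensor, h, sub_self]
  linear_combination (e - f) * hd - (e + 1 - 3 * f) * he - (3 * e - f - 1) * hf

include hI in
lemma idem_surjective (ebar : A ⊗[R] (B ⧸ I)) (hebar : ebar * ebar = ebar) :
    ∃ e : A ⊗[R] B, e * e = e ∧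
      Algebra.TensorProduct.map (AlgHom.id R A) (Ideal.Quotient.mkₐ R I) e = ebar := by
  have hsurj : Function.Surjective
      (Algebra.TensorProduct.map (AlgHom.id R A) (Ideal.Quotient.mkₐ R I) :
        A ⊗[R] B → A ⊗[R] (B ⧸ I)) := by
    intro z
    obtain ⟨w, hw⟩ := LinearMap.lTensor_surjective A
      (g := (Ideal.Quotient.mkₐ R I).toLinearMap) Ideal.Quotient.mk_surjective z
    exact ⟨w, by rw [map_eq_lTensor, hw]⟩
  obtain ⟨x, hx⟩ := hsurj ebar
  set Q := Algebra.TensorProduct.map (AlgHom.id R A) (Ideal.Quotient.mkₐ R I) with hQ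
  have hdker : Q (x * x - x) = 0 := by
    rw [map_sub, map_mul, hx, hebar, sub_self]
  have hdd : (x * x - x) * (x * x - x) = 0 := by
    apply mul_eq_zero_of_ker I hI <;> rw [← map_eq_lTensor]; exact hdker; exact hdker
  refine ⟨x + (1 - 2 * x) * (x * x - x), ?_, ?_⟩
  · linear_combination ((1 - 2 * x) ^ 2 - 4) * hdd
  · rw [map_add, map_mul, hdker, mul_zero, add_zero, hx]

end Etale

section CoordMap

variable {B : Type u} [CommRing B] [Algebra R B] (I : Ideal B)

lemma coord_map (i : Fin n) (z : A ⊗[R] B) :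
    coord φ (B ⧸ I) i (Algebra.TensorProduct.map (AlgHom.id R A) (Ideal.Quotient.mkₐ R I) z)
      = Ideal.Quotient.mk I (coord φ B i z) := by
  induction z using TensorProduct.induction_on with
  | zero => simp
  | tmul x b => simp [Algebra.smul_def]
  | add u v hu hv => simp [hu, hv]

end CoordMap

include hφ in
theorem formallyEtale : Algebra.FormallyEtale R (Model a φ) := by
  rw [Algebra.FormallyEtale.iff_comp_bijective]
  intro B _ _ I hI
  constructor
  · -- injectivity
    intro f g hfg
    set t : Fin n → B := fun i => f (Ideal.Quotient.mk (Jdl a φ) (MvPolynomial.X i)) with hT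
    set t' : Fin n → B := fun i => g (Ideal.Quotient.mk (Jdl a φ) (MvPolynomial.X i)) with hT'
    have hst : Sat a φ t := sat_of_algHom a φ f
    have hst' : Sat a φ t' := sat_of_algHom a φ g
    have hmk : ∀ i, Ideal.Quotient.mk I (t i) = Ideal.Quotient.mk I (t' i) := by
      intro i
      have := DFunLike.congr_fun hfg (Ideal.Quotient.mk (Jdl a φ) (MvPolynomial.X i))
      simpa using this
    have he : (∑ j, a j ⊗ₜ[R] t j) * (∑ j, a j ⊗ₜ[R] t j) = ∑ j, a j ⊗ₜ[R] t j :=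
      idem_of_sat a φ hφ hst
    have he' : (∑ j, a j ⊗ₜ[R] t' j) * (∑ j, a j ⊗ₜ[R] t' j) = ∑ j, a j ⊗ₜ[R] t' j :=
      idem_of_sat a φ hφ hst'
    have hQeq : Algebra.TensorProduct.map (AlgHom.id R A) (Ideal.Quotient.mkₐ R I)
          (∑ j, a j ⊗ₜ[R] t j)
        = Algebra.TensorProduct.map (AlgHom.id R A) (Ideal.Quotient.mkₐ R I)
          (∑ j, a j ⊗ₜ[R] t' j) := by
      simp only [map_sum, Algebra.TensorProduct.map_tmul, AlgHom.coe_id, id_eq,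
        Ideal.Quotient.mkₐ_eq_mk]
      exact Finset.sum_congr rfl fun j _ => by rw [hmk j]
    have heq : (∑ j, a j ⊗ₜ[R] t j) = ∑ j, a j ⊗ₜ[R] t' j :=
      idem_injective I hI he he' hQeq
    have htt' : t = t' := by
      funext i
      have h1 : t i = coord φ B i (∑ j, a j ⊗ₜ[R] t j) := by
        rw [coord_sum_tmul]; exact hst.1 i
      have h2 : t' i = coord φ B i (∑ j, a j ⊗ₜ[R] t' j) := by
        rw [coord_sum_tmul]; exact hst'.1 i
      rw [h1, h2, heq]
    apply algHom_ext_model a φ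
    intro i
    exact congrFun htt' i
  · -- surjectivity
    intro fbar
    set s : Fin n → B ⧸ I := fun i => fbar (Ideal.Quotient.mk (Jdl a φ) (MvPolynomial.X i))
      with hS
    have hss : Sat a φ s := sat_of_algHom a φ fbar
    have hebar : (∑ j, a j ⊗ₜ[R] s j) * (∑ j, a j ⊗ₜ[R] s j) = ∑ j, a j ⊗ₜ[R] s j :=
      idem_of_sat a φ hφ hss
    obtain ⟨e, he, hQe⟩ := idem_surjective I hI _ hebar
    set t : Fin n → B := fun i => coord φ B i e with hT
    have hst : Sat a φ t := sat_coord a φ hφ he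
    have hmkt : ∀ i, Ideal.Quotient.mk I (t i) = s i := by
      intro i
      rw [hT]
      rw [← coord_map, hQe, coord_sum_tmul]
      exact (hss.1 i).symm
    refine ⟨Ideal.Quotient.liftₐ (Jdl a φ) (MvPolynomial.aeval t) (aeval_mem_Jdl a φ hst), ?_⟩
    apply algHom_ext_model a φ
    intro i
    simp only [AlgHom.coe_comp, Function.comp_apply, Ideal.Quotient.mkₐ_eq_mk,
      Ideal.Quotient.liftₐ_apply, Ideal.Quotient.lift_mk, AlgHom.coe_toRingHom,
      MvPolynomial.aeval_X]
    erw [Ideal.Quotient.lift_mk]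
    simp only [AlgHom.coe_toRingHom, MvPolynomial.aeval_X]
    exact hmkt i

theorem finitePresentation : Algebra.FinitePresentation R (Model a φ) :=
  Algebra.FinitePresentation.quotient (Submodule.fg_span (Set.finite_range (gens a φ)))

end IdemModelAux

/-- Data of an étale model for the scheme of idempotents `Id(Z)` of a finite locally free
cover `Z → X = Spec R` with `A = O(Z)`: an étale `R`-algebra `C` whose `T`-points, for every
`R`-algebra `T`, are the idempotents of `A ⊗_R T`. -/
structure EtaleIdempotentModel (R A : Type u) [CommRing R] [CommRing A] [Algebra R A] :
    Type (u + 1) where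
  C : Type u
  [commRingC : CommRing C]
  [algebraC : Algebra R C]
  etale : Algebra.Etale R C
  represents : ∀ (T : Type u) [CommRing T] [Algebra R T],
    Nonempty ((C →ₐ[R] T) ≃ {e : A ⊗[R] T // e * e = e})

/-- For `f : Z → X` finite locally free with `A = f_* O_Z` (affinely: `A` a commutative
`R`-algebra, finite and projective as an `R`-module), the idempotent scheme `Id(Z) → X` is
étale: the functor of idempotents of `A ⊗_R -` is representable by an étale `R`-algebra. -/
theorem idempotent_scheme_etale (R A : Type u) [CommRing R] [CommRing A] [Algebra R A]
    [Module.Finite R A] [Module.Projective R A] :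
    Nonempty (EtaleIdempotentModel R A) := by
  obtain ⟨n, π, hπ⟩ := Module.Finite.exists_fin' R A
  obtain ⟨s, hs⟩ := Module.projective_lifting_property π LinearMap.id hπ
  set a : Fin n → A := fun i => π (Pi.single i 1) with ha
  set φ : Fin n → (A →ₗ[R] R) := fun i => (LinearMap.proj i).comp s with hφdef
  have hφ : ∀ x : A, ∑ i, φ i x • a i = x := by
    intro x
    have h1 : ∑ i, (s x i) • (Pi.single i 1 : Fin n → R) = s x := by
      ext j
      simp [Pi.single_apply]
    have h2 : ∀ i, φ i x • a i = π ((s x i) • (Pi.single i 1 : Fin n → R)) := by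
      intro i
      rw [map_smul]
      rfl
    rw [Finset.sum_congr rfl fun i _ => h2 i, ← map_sum, h1]
    have := DFunLike.congr_fun hs x
    simpa using this
  refine ⟨{ C := IdemModelAux.Model a φ
            etale := ⟨IdemModelAux.formallyEtale a φ hφ, IdemModelAux.finitePresentation a φ⟩
            represents := fun T _ _ =>
              ⟨(IdemModelAux.tupleEquiv a φ).trans (IdemModelAux.satEquivIdem a φ hφ)⟩ }⟩
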